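/- Let $N\ge n+1$, let $u_1,\dots,u_N\in\mathbb{S}^{n-1}$ not be concentrated on a closed hemisphere, let $\alpha_1,\dots,\alpha_N>0$, and let $P$ be a polytope in $\mathcal{P}(u_1,\dots,u_N)$. Then the function $\Psi(\eta)=\sum_{i=1}^N\alpha_i\log(h_P(u_i)-\eta\cdot u_i)$, defined on the interior of $P$, attains its maximum at a unique interior point $\eta(P)$. -/
import Mathlib

open scoped RealInnerProductSpace

/-- Let `u₁,…,u_N` (`N ≥ n+1`) be unit vectors not concentrated on a
closed hemisphere and `α_i > 0`. For a polytope `P = ⋂ᵢ {x : x·uᵢ ≤ aᵢ}` with nonempty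
interior, the function `Ψ(η) = ∑ αᵢ log(h_P(uᵢ) - η·uᵢ)` attains its maximum over the
interior of `P` at a unique interior point. -/
theorem stmt_15 {n N : ℕ} (hN : n + 1 ≤ N)
    (u : Fin N → EuclideanSpace ℝ (Fin n))
    (hu : ∀ i, ‖u i‖ = 1)
    (hhemi : ∀ w : EuclideanSpace ℝ (Fin n), w ≠ 0 → ∃ i, ⟪w, u i⟫ < 0)
    (α : Fin N → ℝ) (hα : ∀ i, 0 < α i)
    (a : Fin N → ℝ)
    (P : Set (EuclideanSpace ℝ (Fin n)))
    (hP : P = ⋂ i, {x : EuclideanSpace ℝ (Fin n) | ⟪x, u i⟫ ≤ a i})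
    (hPint : (interior P).Nonempty)
    (hK : EuclideanSpace ℝ (Fin n) → ℝ)
    (hhK : ∀ v, hK v = sSup ((fun x => ⟪x, v⟫) '' P))
    (Ψ : EuclideanSpace ℝ (Fin n) → ℝ)
    (hΨ : ∀ η, Ψ η = ∑ i, α i * Real.log (hK (u i) - ⟪η, u i⟫)) :
    ∃! η : EuclideanSpace ℝ (Fin n),
      η ∈ interior P ∧ ∀ ζ ∈ interior P, Ψ ζ ≤ Ψ η := by
  classical
  obtain ⟨η₀, hη₀⟩ := hPint
  by_cases hsing : Subsingleton (EuclideanSpace ℝ (Fin n))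
  · refine ⟨η₀, ⟨hη₀, fun ζ hζ => ?_⟩, fun η' _ => Subsingleton.elim _ _⟩
    rw [Subsingleton.elim ζ η₀]
  have hnt : Nontrivial (EuclideanSpace ℝ (Fin n)) :=
    not_subsingleton_iff_nontrivial.mp hsing
  have hPne : P.Nonempty := ⟨η₀, interior_subset hη₀⟩
  have hNpos : 0 < N := lt_of_lt_of_le (Nat.succ_pos n) hN
  haveI : Nonempty (Fin N) := Fin.pos_iff_nonempty.mp hNpos
  have hNne : (Finset.univ : Finset (Fin N)).Nonempty := Finset.univ_nonempty
  have hmemP : ∀ x ∈ P, ∀ i, ⟪x, u i⟫ ≤ a i := by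
    intro x hx i
    rw [hP] at hx
    exact Set.mem_iInter.mp hx i
  have hle_hK : ∀ x ∈ P, ∀ i, ⟪x, u i⟫ ≤ hK (u i) := by
    intro x hx i
    rw [hhK]
    exact le_csSup ⟨a i, by rintro y ⟨z, hz, rfl⟩; exact hmemP z hz i⟩ ⟨x, hx, rfl⟩
  have hKa : ∀ i, hK (u i) ≤ a i := by
    intro i; rw [hhK]
    exact csSup_le (hPne.image _) (by rintro y ⟨z, hz, rfl⟩; exact hmemP z hz i)
  -- inner product is continuous in the first argument
  have hicont : ∀ i, Continuous fun x : EuclideanSpace ℝ (Fin n) => ⟪x, u i⟫ :=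
    fun i => continuous_id.inner continuous_const
  -- strict positivity of the arguments on the interior
  have hpos : ∀ η ∈ interior P, ∀ i, 0 < hK (u i) - ⟪η, u i⟫ := by
    intro η hη i
    obtain ⟨δ, hδ, hball⟩ := Metric.mem_nhds_iff.mp (mem_interior_iff_mem_nhds.mp hη)
    have hx : η + (δ/2) • u i ∈ P := by
      apply hball
      rw [Metric.mem_ball, dist_eq_norm]
      have : η + (δ/2) • u i - η = (δ/2) • u i := by abel
      rw [this, norm_smul, hu i, mul_one, Real.norm_eq_abs, abs_of_pos (by linarith)]
      linarith
    have h1 := hle_hK _ hx i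
    rw [inner_add_left, real_inner_smul_left, real_inner_self_eq_norm_mul_norm, hu i] at h1
    nlinarith
  -- points with uniform slack are interior points
  have hKsub : ∀ ε : ℝ, 0 < ε → ∀ η : EuclideanSpace ℝ (Fin n),
      (∀ i, ⟪η, u i⟫ ≤ hK (u i) - ε) → η ∈ interior P := by
    intro ε hε η hη
    have hball : Metric.ball η ε ⊆ P := by
      intro y hy
      rw [hP, Set.mem_iInter]
      intro i
      have h1 : ⟪y - η, u i⟫ ≤ ‖y - η‖ * ‖u i‖ := real_inner_le_norm _ _
      rw [hu i, mul_one] at h1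
      have h2 : ‖y - η‖ < ε := by rwa [Metric.mem_ball, dist_eq_norm] at hy
      have h3 : ⟪y, u i⟫ = ⟪η, u i⟫ + ⟪y - η, u i⟫ := by
        rw [← inner_add_left]
        congr 1
        abel
      have h4 := hη i
      have h5 := hKa i
      simp only [Set.mem_setOf_eq]
      linarith
    exact mem_interior.mpr ⟨Metric.ball η ε, hball, Metric.isOpen_ball, Metric.mem_ball_self hε⟩
  -- P is bounded
  have hRb : ∃ R : ℝ, ∀ x ∈ P, ‖x‖ ≤ R := by
    have hcs : IsCompact (Metric.sphere (0 : EuclideanSpace ℝ (Fin n)) 1) :=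
      isCompact_sphere _ _
    have hsne : (Metric.sphere (0 : EuclideanSpace ℝ (Fin n)) 1).Nonempty :=
      NormedSpace.sphere_nonempty.mpr zero_le_one
    set g : EuclideanSpace ℝ (Fin n) → ℝ :=
      fun v => Finset.univ.sup' hNne (fun i => ⟪v, u i⟫) with hg
    have hgc : Continuous g := by
      rw [hg]
      exact Continuous.finset_sup'_apply hNne (fun i _ => hicont i)
    obtain ⟨v₀, hv₀s, hv₀⟩ := hcs.exists_isMinOn hsne hgc.continuousOn
    have hv₀ne : v₀ ≠ 0 := by
      intro h
      rw [mem_sphere_iff_norm, h, sub_zero, norm_zero] at hv₀s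
      norm_num at hv₀s
    have hm : 0 < g v₀ := by
      obtain ⟨i, hi⟩ := hhemi (-v₀) (neg_ne_zero.mpr hv₀ne)
      rw [inner_neg_left] at hi
      have h1 : (0:ℝ) < ⟪v₀, u i⟫ := by linarith
      rw [hg]
      exact lt_of_lt_of_le h1 (Finset.le_sup' (fun j => ⟪v₀, u j⟫) (Finset.mem_univ i))
    set C := Finset.univ.sup' hNne (fun i => a i - ⟪η₀, u i⟫) with hC
    have hCpos : 0 < C := by
      obtain ⟨i, _⟩ := hNne
      have h1 : ⟪η₀, u i⟫ < hK (u i) := by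
        have := hpos η₀ hη₀ i; linarith
      have h2 : a i - ⟪η₀, u i⟫ ≤ C := by
        rw [hC]; exact Finset.le_sup' (fun j => a j - ⟪η₀, u j⟫) (Finset.mem_univ i)
      have := hKa i
      linarith
    refine ⟨‖η₀‖ + C / g v₀, fun x hx => ?_⟩
    by_cases hxη : x = η₀
    · subst hxη
      have : 0 ≤ C / g v₀ := le_of_lt (div_pos hCpos hm)
      linarith
    · set w := x - η₀ with hw
      have hwne : w ≠ 0 := sub_ne_zero.mpr hxη
      have hwpos : 0 < ‖w‖ := norm_pos_iff.mpr hwne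
      have hv : ‖w‖⁻¹ • w ∈ Metric.sphere (0 : EuclideanSpace ℝ (Fin n)) 1 := by
        rw [mem_sphere_iff_norm, sub_zero, norm_smul, Real.norm_eq_abs,
          abs_of_pos (inv_pos.mpr hwpos), inv_mul_cancel₀ (ne_of_gt hwpos)]
      have h1 : g v₀ ≤ g (‖w‖⁻¹ • w) := hv₀ hv
      obtain ⟨i, _, hi⟩ := Finset.exists_mem_eq_sup' hNne (fun i => ⟪‖w‖⁻¹ • w, u i⟫)
      have h2 : g v₀ ≤ ⟪‖w‖⁻¹ • w, u i⟫ := by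
        rw [hg] at h1
        rw [← hi]
        exact h1
      rw [real_inner_smul_left] at h2
      have h3 : g v₀ * ‖w‖ ≤ ⟪w, u i⟫ := by
        have := mul_le_mul_of_nonneg_right h2 (le_of_lt hwpos)
        rwa [mul_comm (‖w‖⁻¹) _, mul_assoc, inv_mul_cancel₀ (ne_of_gt hwpos), mul_one] at this
      have h4 : ⟪w, u i⟫ ≤ C := by
        have h5 : ⟪x, u i⟫ ≤ a i := hmemP x hx i
        have h6 : ⟪w, u i⟫ = ⟪x, u i⟫ - ⟪η₀, u i⟫ := inner_sub_left _ _ _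
        have h7 : a i - ⟪η₀, u i⟫ ≤ C := by
          rw [hC]; exact Finset.le_sup' (fun j => a j - ⟪η₀, u j⟫) (Finset.mem_univ i)
        linarith
      have hwle : ‖w‖ ≤ C / g v₀ := by
        rw [le_div_iff₀ hm]
        nlinarith
      calc ‖x‖ = ‖η₀ + w‖ := by rw [hw]; congr 1; abel
        _ ≤ ‖η₀‖ + ‖w‖ := norm_add_le _ _
        _ ≤ ‖η₀‖ + C / g v₀ := by linarith
  obtain ⟨R, hR⟩ := hRb
  -- convexity
  have hPconv : Convex ℝ P := by
    rw [hP]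
    apply convex_iInter
    intro i x hx y hy s t hs ht hst
    simp only [Set.mem_setOf_eq] at hx hy ⊢
    rw [inner_add_left, real_inner_smul_left, real_inner_smul_left]
    calc s * ⟪x, u i⟫ + t * ⟪y, u i⟫ ≤ s * a i + t * a i := by
          apply add_le_add
          · exact mul_le_mul_of_nonneg_left hx hs
          · exact mul_le_mul_of_nonneg_left hy ht
      _ = a i := by rw [← add_mul, hst, one_mul]
  -- upper bound on the arguments
  set c := Ψ η₀ with hc
  set M := max 1 (Finset.univ.sup' hNne fun i => hK (u i) + R) with hM
  have hM1 : (1:ℝ) ≤ M := le_max_left _ _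
  have htM : ∀ η ∈ P, ∀ i, hK (u i) - ⟪η, u i⟫ ≤ M := by
    intro η hη i
    have h1 : |⟪η, u i⟫| ≤ ‖η‖ * ‖u i‖ := abs_real_inner_le_norm _ _
    rw [hu i, mul_one] at h1
    have h2 : -⟪η, u i⟫ ≤ ‖η‖ := by
      have := abs_le.mp h1
      linarith [this.1]
    have h3 : hK (u i) + R ≤ Finset.univ.sup' hNne fun i => hK (u i) + R :=
      Finset.le_sup' (fun j => hK (u j) + R) (Finset.mem_univ i)
    have h4 : Finset.univ.sup' hNne (fun i => hK (u i) + R) ≤ M := le_max_right _ _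
    have h5 := hR η hη
    linarith
  set B := (∑ i, α i) * Real.log M with hB
  have hlogM : 0 ≤ Real.log M := Real.log_nonneg hM1
  -- lower bound on arguments from a lower bound on Ψ
  have key : ∀ η ∈ interior P, c ≤ Ψ η →
      ∀ j, Real.exp ((c - B) / α j) ≤ hK (u j) - ⟪η, u j⟫ := by
    intro η hη hcle j
    have hηP : η ∈ P := interior_subset hη
    have hterm : ∀ i, α i * Real.log (hK (u i) - ⟪η, u i⟫) ≤ α i * Real.log M := fun i =>
      mul_le_mul_of_nonneg_left
        (Real.log_le_log (hpos η hη i) (htM η hηP i)) (hα i).le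
    have hsplit : Ψ η = α j * Real.log (hK (u j) - ⟪η, u j⟫) +
        ∑ i ∈ Finset.univ.erase j, α i * Real.log (hK (u i) - ⟪η, u i⟫) := by
      rw [hΨ]
      exact (Finset.add_sum_erase _ _ (Finset.mem_univ j)).symm
    have hrest : ∑ i ∈ Finset.univ.erase j, α i * Real.log (hK (u i) - ⟪η, u i⟫) ≤ B := by
      calc ∑ i ∈ Finset.univ.erase j, α i * Real.log (hK (u i) - ⟪η, u i⟫)
          ≤ ∑ i ∈ Finset.univ.erase j, α i * Real.log M :=
            Finset.sum_le_sum fun i _ => hterm i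
        _ ≤ ∑ i, α i * Real.log M :=
            Finset.sum_le_sum_of_subset_of_nonneg (Finset.erase_subset _ _)
              (fun i _ _ => mul_nonneg (hα i).le hlogM)
        _ = B := by rw [hB, Finset.sum_mul]
    have h5 : c - B ≤ α j * Real.log (hK (u j) - ⟪η, u j⟫) := by
      rw [hsplit] at hcle
      linarith
    have h6 : (c - B) / α j ≤ Real.log (hK (u j) - ⟪η, u j⟫) := by
      rw [div_le_iff₀ (hα j)]
      linarith [h5]
    calc Real.exp ((c - B) / α j) ≤ Real.exp (Real.log (hK (u j) - ⟪η, u j⟫)) :=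
          Real.exp_le_exp.mpr h6
      _ = hK (u j) - ⟪η, u j⟫ := Real.exp_log (hpos η hη j)
  set ε := Finset.univ.inf' hNne fun j => Real.exp ((c - B) / α j) with hε
  have hεpos : 0 < ε := by
    rw [hε, Finset.lt_inf'_iff]
    exact fun j _ => Real.exp_pos _
  set Kc : Set (EuclideanSpace ℝ (Fin n)) := {η | ∀ i, ⟪η, u i⟫ ≤ hK (u i) - ε} with hKc
  have hKint : Kc ⊆ interior P := fun η hη => hKsub ε hεpos η hη
  have hsupm : ∀ η ∈ interior P, c ≤ Ψ η → η ∈ Kc := by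
    intro η hη hcle i
    have h1 := key η hη hcle i
    have h2 : ε ≤ Real.exp ((c - B) / α i) := Finset.inf'_le _ (Finset.mem_univ i)
    show ⟪η, u i⟫ ≤ hK (u i) - ε
    linarith
  have hη₀K : η₀ ∈ Kc := hsupm η₀ hη₀ le_rfl
  have hKclosed : IsClosed Kc := by
    have : Kc = ⋂ i, {η : EuclideanSpace ℝ (Fin n) | ⟪η, u i⟫ ≤ hK (u i) - ε} := by
      ext x; simp [hKc, Set.mem_iInter]
    rw [this]
    exact isClosed_iInter fun i => isClosed_le (hicont i) continuous_const
  have hKcpt : IsCompact Kc := by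
    apply Metric.isCompact_of_isClosed_isBounded hKclosed
    have hKP : Kc ⊆ Metric.closedBall 0 R := by
      intro η hη
      rw [Metric.mem_closedBall, dist_zero_right]
      exact hR η (interior_subset (hKint hη))
    exact Bornology.IsBounded.subset (Metric.isBounded_closedBall) hKP
  have hΨcont : ContinuousOn Ψ Kc := by
    have hΨeq : Ψ = fun η => ∑ i, α i * Real.log (hK (u i) - ⟪η, u i⟫) := funext hΨ
    rw [hΨeq]
    apply continuousOn_finset_sum
    intro i _
    apply ContinuousOn.mul continuousOn_const
    apply ContinuousOn.log
    · exact (continuous_const.sub (hicont i)).continuousOn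
    · intro η hη
      exact ne_of_gt (hpos η (hKint hη) i)
  obtain ⟨η, hηK, hηmax⟩ := hKcpt.exists_isMaxOn ⟨η₀, hη₀K⟩ hΨcont
  have hmax : ∀ ζ ∈ interior P, Ψ ζ ≤ Ψ η := by
    intro ζ hζ
    by_cases hc' : c ≤ Ψ ζ
    · exact hηmax (hsupm ζ hζ hc')
    · push_neg at hc'
      exact hc'.le.trans (hηmax hη₀K)
  refine ⟨η, ⟨hKint hηK, hmax⟩, ?_⟩
  rintro η' ⟨hη', hmax'⟩
  by_contra hne
  -- two distinct maximizers lead to a contradiction via strict concavity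
  have hΨeq2 : Ψ η' = Ψ η := le_antisymm (hmax η' hη') (hmax' η (hKint hηK))
  set m : EuclideanSpace ℝ (Fin n) := (1/2 : ℝ) • η' + (1/2 : ℝ) • η with hmdef
  have hmint : m ∈ interior P := by
    have hconv : Convex ℝ (interior P) := hPconv.interior
    exact hconv hη' (hKint hηK) (by norm_num) (by norm_num) (by norm_num)
  have htm : ∀ i, hK (u i) - ⟪m, u i⟫ =
      (1/2 : ℝ) * (hK (u i) - ⟪η', u i⟫) + (1/2 : ℝ) * (hK (u i) - ⟪η, u i⟫) := by
    intro i
    rw [hmdef, inner_add_left, real_inner_smul_left, real_inner_smul_left]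
    ring
  obtain ⟨i₀, hi₀⟩ := hhemi (η' - η) (sub_ne_zero.mpr hne)
  have hi₀ne : hK (u i₀) - ⟪η', u i₀⟫ ≠ hK (u i₀) - ⟪η, u i₀⟫ := by
    rw [inner_sub_left] at hi₀
    intro h
    have : ⟪η', u i₀⟫ = ⟪η, u i₀⟫ := by linarith
    linarith
  have hterm_le : ∀ i, α i * ((1/2 : ℝ) * Real.log (hK (u i) - ⟪η', u i⟫) +
      (1/2 : ℝ) * Real.log (hK (u i) - ⟪η, u i⟫)) ≤ α i * Real.log (hK (u i) - ⟪m, u i⟫) := by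
    intro i
    apply mul_le_mul_of_nonneg_left _ (hα i).le
    rw [htm i]
    exact strictConcaveOn_log_Ioi.concaveOn.2
      (Set.mem_Ioi.mpr (hpos η' hη' i)) (Set.mem_Ioi.mpr (hpos η (hKint hηK) i))
      (by norm_num) (by norm_num) (by norm_num)
  have hterm_lt : α i₀ * ((1/2 : ℝ) * Real.log (hK (u i₀) - ⟪η', u i₀⟫) +
      (1/2 : ℝ) * Real.log (hK (u i₀) - ⟪η, u i₀⟫)) < α i₀ * Real.log (hK (u i₀) - ⟪m, u i₀⟫) := by
    apply mul_lt_mul_of_pos_left _ (hα i₀)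
    rw [htm i₀]
    exact strictConcaveOn_log_Ioi.2
      (Set.mem_Ioi.mpr (hpos η' hη' i₀)) (Set.mem_Ioi.mpr (hpos η (hKint hηK) i₀))
      hi₀ne (by norm_num) (by norm_num) (by norm_num)
  have hsum_lt : ∑ i, α i * ((1/2 : ℝ) * Real.log (hK (u i) - ⟪η', u i⟫) +
      (1/2 : ℝ) * Real.log (hK (u i) - ⟪η, u i⟫)) < Ψ m := by
    rw [hΨ]
    exact Finset.sum_lt_sum (fun i _ => hterm_le i) ⟨i₀, Finset.mem_univ i₀, hterm_lt⟩
  have hsum_eq : ∑ i, α i * ((1/2 : ℝ) * Real.log (hK (u i) - ⟪η', u i⟫) +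
      (1/2 : ℝ) * Real.log (hK (u i) - ⟪η, u i⟫)) = (1/2 : ℝ) * Ψ η' + (1/2 : ℝ) * Ψ η := by
    rw [hΨ η', hΨ η, Finset.mul_sum, Finset.mul_sum, ← Finset.sum_add_distrib]
    congr 1
    ext i
    ring
  have hmle : Ψ m ≤ Ψ η := hmax m hmint
  rw [hsum_eq, hΨeq2] at hsum_lt
  linarith
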